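/- For all θ ∈ ℝ and |y| small, the generating function identity holds: ∑_{j=0}^{5} ∑_{k=0}^{∞} ((1 + cos(θ+jπ/3)/√3)^k − (1 + cos(π/6+jπ/3)/√3)^k) y^k = (y⁶ cos²θ (4cos²θ − 3)² / 216) · (1/(1−y) + 2/(2−y) + 2/(2−3y)) · ∏_{j=0}^{5} 1/(1 − y(1 + cos(θ+jπ/3)/√3)). -/
import Mathlib


open Real

set_option maxHeartbeats 1000000 in
theorem stmt10 (θ y : ℝ) (hy : |y| < 1/2) :
    ∑ j ∈ Finset.range 6, ∑' k : ℕ,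
        (((1 + Real.cos (θ + j * π / 3) / Real.sqrt 3) ^ k
          - (1 + Real.cos (π / 6 + j * π / 3) / Real.sqrt 3) ^ k) * y ^ k)
      = (y ^ 6 * Real.cos θ ^ 2 * (4 * Real.cos θ ^ 2 - 3) ^ 2 / 216)
          * (1 / (1 - y) + 2 / (2 - y) + 2 / (2 - 3 * y))
          * ∏ j ∈ Finset.range 6,
              (1 - y * (1 + Real.cos (θ + j * π / 3) / Real.sqrt 3))⁻¹ := by
  have h3 : (0:ℝ) < Real.sqrt 3 := by positivity
  have hr2 : Real.sqrt 3 ^ 2 = 3 := Real.sq_sqrt (by norm_num)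
  have hr1 : 1 < Real.sqrt 3 := by nlinarith
  have hrne : Real.sqrt 3 ≠ 0 := ne_of_gt h3
  have hbound : ∀ φ : ℝ, |y * (1 + Real.cos φ / Real.sqrt 3)| < 1 := by
    intro φ
    have hc1 : |Real.cos φ| ≤ 1 := Real.abs_cos_le_one φ
    have h2 : |Real.cos φ / Real.sqrt 3| ≤ 1 := by
      rw [abs_div, abs_of_pos h3, div_le_one h3]
      nlinarith [abs_nonneg (Real.cos φ)]
    have h4 : |1 + Real.cos φ / Real.sqrt 3| ≤ 2 := by
      calc |1 + Real.cos φ / Real.sqrt 3| ≤ |(1:ℝ)| + |Real.cos φ / Real.sqrt 3| := abs_add_le _ _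
        _ ≤ 2 := by rw [abs_one]; linarith
    rw [abs_mul]
    nlinarith [abs_nonneg y, abs_nonneg (1 + Real.cos φ / Real.sqrt 3)]
  have hne : ∀ x : ℝ, |y * x| < 1 → 1 - y * x ≠ 0 := by
    intro x hx h
    have h1 : y * x = 1 := by linarith
    rw [h1] at hx; norm_num at hx
  have hgeo : ∀ φ ψ : ℝ, ∑' k : ℕ,
      (((1 + Real.cos φ / Real.sqrt 3) ^ k - (1 + Real.cos ψ / Real.sqrt 3) ^ k) * y ^ k)
      = (1 - y * (1 + Real.cos φ / Real.sqrt 3))⁻¹ - (1 - y * (1 + Real.cos ψ / Real.sqrt 3))⁻¹ := by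
    intro φ ψ
    have hA := hbound φ; have hB := hbound ψ
    have h1 : ∀ k : ℕ, ((1 + Real.cos φ / Real.sqrt 3) ^ k - (1 + Real.cos ψ / Real.sqrt 3) ^ k) * y ^ k
        = (y * (1 + Real.cos φ / Real.sqrt 3)) ^ k - (y * (1 + Real.cos ψ / Real.sqrt 3)) ^ k := by
      intro k; rw [mul_pow, mul_pow]; ring
    simp only [h1]
    rw [Summable.tsum_sub (summable_geometric_of_abs_lt_one hA) (summable_geometric_of_abs_lt_one hB),
      tsum_geometric_of_abs_lt_one hA, tsum_geometric_of_abs_lt_one hB]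
  simp only [Finset.sum_range_succ, Finset.sum_range_zero, Finset.prod_range_succ,
    Finset.prod_range_zero, hgeo]
  push_cast
  obtain ⟨d, hd⟩ : ∃ d : ℝ, Real.cos θ = Real.sqrt 3 * d :=
    ⟨Real.cos θ / Real.sqrt 3, by rw [mul_comm, div_mul_cancel₀ _ hrne]⟩
  have hs2 : Real.sin θ ^ 2 = 1 - 3 * d ^ 2 := by
    rw [Real.sin_sq θ, hd]; linear_combination (-(d^2)) * hr2
  have hc2 : Real.cos θ ^ 2 = 3 * d ^ 2 := by
    rw [hd]; linear_combination d^2 * hr2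
  have hPos : Real.sqrt 3 / 2 / Real.sqrt 3 = 1/2 := by
    rw [div_div, mul_comm, ← div_div, div_self hrne]
  have hNeg : -(Real.sqrt 3 / 2) / Real.sqrt 3 = -(1/2) := by
    rw [neg_div, hPos]
  have hc23 : Real.cos (2 * π / 3) = -(1/2) := by
    rw [show (2*π/3:ℝ) = π - π/3 by ring, Real.cos_pi_sub, Real.cos_pi_div_three]
  have hs23 : Real.sin (2 * π / 3) = Real.sqrt 3 / 2 := by
    rw [show (2*π/3:ℝ) = π - π/3 by ring, Real.sin_pi_sub, Real.sin_pi_div_three]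
  have hc43 : Real.cos (4 * π / 3) = -(1/2) := by
    rw [show (4*π/3:ℝ) = π - (-(π/3)) by ring, Real.cos_pi_sub, Real.cos_neg, Real.cos_pi_div_three]
  have hs43 : Real.sin (4 * π / 3) = -(Real.sqrt 3 / 2) := by
    rw [show (4*π/3:ℝ) = π - (-(π/3)) by ring, Real.sin_pi_sub, Real.sin_neg, Real.sin_pi_div_three]
  have hc53 : Real.cos (5 * π / 3) = 1/2 := by
    rw [show (5*π/3:ℝ) = π - (-(2*π/3)) by ring, Real.cos_pi_sub, Real.cos_neg, hc23]; norm_num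
  have hs53 : Real.sin (5 * π / 3) = -(Real.sqrt 3 / 2) := by
    rw [show (5*π/3:ℝ) = π - (-(2*π/3)) by ring, Real.sin_pi_sub, Real.sin_neg, hs23]
  have hA0 : Real.cos (θ + 0 * π / 3) / Real.sqrt 3 = d := by
    rw [show θ + 0 * π / 3 = θ by ring, hd, mul_comm, mul_div_assoc, div_self hrne, mul_one]
  have hA1 : Real.cos (θ + 1 * π / 3) / Real.sqrt 3 = (d - Real.sin θ) / 2 := by
    rw [show θ + 1 * π / 3 = θ + π / 3 by ring, Real.cos_add, Real.cos_pi_div_three,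
      Real.sin_pi_div_three, hd, div_eq_div_iff hrne two_ne_zero]
    ring
  have hA2 : Real.cos (θ + 2 * π / 3) / Real.sqrt 3 = (-d - Real.sin θ) / 2 := by
    rw [Real.cos_add, hc23, hs23, hd, div_eq_div_iff hrne two_ne_zero]; ring
  have hA3 : Real.cos (θ + 3 * π / 3) / Real.sqrt 3 = -d := by
    rw [show θ + 3 * π / 3 = θ + π by ring, Real.cos_add, Real.cos_pi, Real.sin_pi, hd,
      div_eq_iff hrne]
    ring
  have hA4 : Real.cos (θ + 4 * π / 3) / Real.sqrt 3 = (-d + Real.sin θ) / 2 := by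
    rw [Real.cos_add, hc43, hs43, hd, div_eq_div_iff hrne two_ne_zero]; ring
  have hA5 : Real.cos (θ + 5 * π / 3) / Real.sqrt 3 = (d + Real.sin θ) / 2 := by
    rw [Real.cos_add, hc53, hs53, hd, div_eq_div_iff hrne two_ne_zero]; ring
  have hB0 : 1 + Real.cos (π / 6 + 0 * π / 3) / Real.sqrt 3 = 3/2 := by
    rw [show π/6 + 0 * π / 3 = π/6 by ring, Real.cos_pi_div_six, hPos]; norm_num
  have hB1 : 1 + Real.cos (π / 6 + 1 * π / 3) / Real.sqrt 3 = 1 := by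
    rw [show π/6 + 1 * π / 3 = π/2 by ring, Real.cos_pi_div_two]; norm_num
  have hB2 : 1 + Real.cos (π / 6 + 2 * π / 3) / Real.sqrt 3 = 1/2 := by
    rw [show π/6 + 2 * π / 3 = π - π/6 by ring, Real.cos_pi_sub, Real.cos_pi_div_six, hNeg]; norm_num
  have hB3 : 1 + Real.cos (π / 6 + 3 * π / 3) / Real.sqrt 3 = 1/2 := by
    rw [show π/6 + 3 * π / 3 = π - (-(π/6)) by ring, Real.cos_pi_sub, Real.cos_neg,
      Real.cos_pi_div_six, hNeg]
    norm_num
  have hB4 : 1 + Real.cos (π / 6 + 4 * π / 3) / Real.sqrt 3 = 1 := by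
    rw [show π/6 + 4 * π / 3 = π - (-(π/2)) by ring, Real.cos_pi_sub, Real.cos_neg,
      Real.cos_pi_div_two]
    norm_num
  have hB5 : 1 + Real.cos (π / 6 + 5 * π / 3) / Real.sqrt 3 = 3/2 := by
    rw [show π/6 + 5 * π / 3 = π - (-(5*π/6)) by ring, Real.cos_pi_sub, Real.cos_neg,
      show (5*π/6:ℝ) = π - π/6 by ring, Real.cos_pi_sub, Real.cos_pi_div_six]
    rw [show -(-(Real.sqrt 3/2)) = Real.sqrt 3/2 by ring, hPos]; norm_num
  have hX0ne : 1 - y * (1 + d) ≠ 0 := by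
    have h := hne _ (hbound (θ + 0 * π / 3)); rw [hA0] at h; exact h
  have hX1ne : 1 - y * (1 + (d - Real.sin θ) / 2) ≠ 0 := by
    have h := hne _ (hbound (θ + 1 * π / 3)); rw [hA1] at h; exact h
  have hX2ne : 1 - y * (1 + (-d - Real.sin θ) / 2) ≠ 0 := by
    have h := hne _ (hbound (θ + 2 * π / 3)); rw [hA2] at h; exact h
  have hX3ne : 1 - y * (1 + -d) ≠ 0 := by
    have h := hne _ (hbound (θ + 3 * π / 3)); rw [hA3] at h; exact h
  have hX4ne : 1 - y * (1 + (-d + Real.sin θ) / 2) ≠ 0 := by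
    have h := hne _ (hbound (θ + 4 * π / 3)); rw [hA4] at h; exact h
  have hX5ne : 1 - y * (1 + (d + Real.sin θ) / 2) ≠ 0 := by
    have h := hne _ (hbound (θ + 5 * π / 3)); rw [hA5] at h; exact h
  obtain ⟨hy1, hy2⟩ := abs_lt.mp hy
  have h1y : (1:ℝ) - y ≠ 0 := ne_of_gt (by linarith)
  have h2y : (2:ℝ) - y ≠ 0 := ne_of_gt (by linarith)
  have h23y : (2:ℝ) - 3 * y ≠ 0 := ne_of_gt (by linarith)
  have hc32 : 1 - y * (3/2) ≠ 0 := ne_of_gt (by linarith)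
  have hc12 : 1 - y / 2 ≠ 0 := ne_of_gt (by linarith)
  have m15 : (1 - y * (1 + (d - Real.sin θ) / 2)) * (1 - y * (1 + (d + Real.sin θ) / 2))
      = (1-y)^2 - (1-y)*y*d + y^2*(4*d^2-1)/4 := by
    linear_combination (-(y^2)/4) * hs2
  have m24 : (1 - y * (1 + (-d - Real.sin θ) / 2)) * (1 - y * (1 + (-d + Real.sin θ) / 2))
      = (1-y)^2 + (1-y)*y*d + y^2*(4*d^2-1)/4 := by
    linear_combination (-(y^2)/4) * hs2
  have hD1ne : (1-y)^2 - (1-y)*y*d + y^2*(4*d^2-1)/4 ≠ 0 := m15 ▸ mul_ne_zero hX1ne hX5ne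
  have hD2ne : (1-y)^2 + (1-y)*y*d + y^2*(4*d^2-1)/4 ≠ 0 := m24 ▸ mul_ne_zero hX2ne hX4ne
  have k15 : (1 - y * (1 + (d - Real.sin θ) / 2))⁻¹ + (1 - y * (1 + (d + Real.sin θ) / 2))⁻¹
      = (2 - 2*y - y*d) / ((1-y)^2 - (1-y)*y*d + y^2*(4*d^2-1)/4) := by
    rw [inv_add_inv hX1ne hX5ne,
      show (1 - y * (1 + (d - Real.sin θ) / 2)) + (1 - y * (1 + (d + Real.sin θ) / 2))
        = 2 - 2*y - y*d by ring, m15]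
  have k24 : (1 - y * (1 + (-d - Real.sin θ) / 2))⁻¹ + (1 - y * (1 + (-d + Real.sin θ) / 2))⁻¹
      = (2 - 2*y + y*d) / ((1-y)^2 + (1-y)*y*d + y^2*(4*d^2-1)/4) := by
    rw [inv_add_inv hX2ne hX4ne,
      show (1 - y * (1 + (-d - Real.sin θ) / 2)) + (1 - y * (1 + (-d + Real.sin θ) / 2))
        = 2 - 2*y + y*d by ring, m24]
  rw [hA0, hA1, hA2, hA3, hA4, hA5, hB0, hB1, hB2, hB3, hB4, hB5, hc2]
  rw [show (0:ℝ) + ((1 - y * (1 + d))⁻¹ - (1 - y * (3/2))⁻¹)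
      + ((1 - y * (1 + (d - Real.sin θ) / 2))⁻¹ - (1 - y * 1)⁻¹)
      + ((1 - y * (1 + (-d - Real.sin θ) / 2))⁻¹ - (1 - y * (1/2))⁻¹)
      + ((1 - y * (1 + -d))⁻¹ - (1 - y * (1/2))⁻¹)
      + ((1 - y * (1 + (-d + Real.sin θ) / 2))⁻¹ - (1 - y * 1)⁻¹)
      + ((1 - y * (1 + (d + Real.sin θ) / 2))⁻¹ - (1 - y * (3/2))⁻¹)
      = (1 - y * (1 + d))⁻¹ + (1 - y * (1 + -d))⁻¹
        + ((1 - y * (1 + (d - Real.sin θ) / 2))⁻¹ + (1 - y * (1 + (d + Real.sin θ) / 2))⁻¹)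
        + ((1 - y * (1 + (-d - Real.sin θ) / 2))⁻¹ + (1 - y * (1 + (-d + Real.sin θ) / 2))⁻¹)
        - (2 * (1 - y * (3/2))⁻¹ + 2 * (1 - y * 1)⁻¹ + 2 * (1 - y * (1/2))⁻¹) from by ring,
    k15, k24]
  rw [show (1:ℝ) * (1 - y * (1 + d))⁻¹ * (1 - y * (1 + (d - Real.sin θ) / 2))⁻¹
      * (1 - y * (1 + (-d - Real.sin θ) / 2))⁻¹ * (1 - y * (1 + -d))⁻¹
      * (1 - y * (1 + (-d + Real.sin θ) / 2))⁻¹ * (1 - y * (1 + (d + Real.sin θ) / 2))⁻¹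
      = (1 - y * (1 + d))⁻¹ * (1 - y * (1 + -d))⁻¹
        * ((1 - y * (1 + (d - Real.sin θ) / 2))⁻¹ * (1 - y * (1 + (d + Real.sin θ) / 2))⁻¹)
        * ((1 - y * (1 + (-d - Real.sin θ) / 2))⁻¹ * (1 - y * (1 + (-d + Real.sin θ) / 2))⁻¹)
      from by ring,
    show (1 - y * (1 + (d - Real.sin θ) / 2))⁻¹ * (1 - y * (1 + (d + Real.sin θ) / 2))⁻¹
      = ((1 - y * (1 + (d - Real.sin θ) / 2)) * (1 - y * (1 + (d + Real.sin θ) / 2)))⁻¹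
      from (mul_inv _ _).symm,
    show (1 - y * (1 + (-d - Real.sin θ) / 2))⁻¹ * (1 - y * (1 + (-d + Real.sin θ) / 2))⁻¹
      = ((1 - y * (1 + (-d - Real.sin θ) / 2)) * (1 - y * (1 + (-d + Real.sin θ) / 2)))⁻¹
      from (mul_inv _ _).symm,
    m15, m24, ← mul_inv, ← mul_inv, ← mul_inv]
  have hb1 : 1 - y * 1 ≠ 0 := by rw [mul_one]; exact h1y
  have hE0 : (1 - y * (1 + d)) * (1 - y * (1 + -d)) ≠ 0 := mul_ne_zero hX0ne hX3ne
  simp only [inv_eq_one_div, mul_one_div]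
  rw [div_add_div _ _ hX0ne hX3ne,
    div_add_div _ _ hE0 hD1ne,
    div_add_div _ _ (mul_ne_zero hE0 hD1ne) hD2ne,
    div_add_div _ _ hc32 hb1,
    div_add_div _ _ (mul_ne_zero hc32 hb1) hc12,
    div_sub_div _ _ (mul_ne_zero (mul_ne_zero hE0 hD1ne) hD2ne)
      (mul_ne_zero (mul_ne_zero hc32 hb1) hc12),
    div_add_div _ _ h1y h2y,
    div_add_div _ _ (mul_ne_zero h1y h2y) h23y,
    div_mul_div_comm, div_div,
    div_eq_div_iff
      (mul_ne_zero (mul_ne_zero (mul_ne_zero hE0 hD1ne) hD2ne)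
        (mul_ne_zero (mul_ne_zero hc32 hb1) hc12))
      (mul_ne_zero (mul_ne_zero (by norm_num : (216:ℝ) ≠ 0)
        (mul_ne_zero (mul_ne_zero h1y h2y) h23y))
        (mul_ne_zero (mul_ne_zero (mul_ne_zero hX0ne hX3ne) hD1ne) hD2ne))]
  ring
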